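/- For t ≥ 3, the set S consisting of all of V_2 together with all binary strings in V_1 having an even number of 1's is a fault-tolerant resolving set of M_t of size t + 2^{t−1}. -/

import Mathlib

open SimpleGraph Function
open scoped Classical

/-- A set `S` is a resolving set of `G`: every pair of distinct vertices differ in
distance to some element of `S`. -/
def IsResolving {V : Type*} (G : SimpleGraph V) (S : Set V) : Prop :=
  ∀ x y : V, x ≠ y → ∃ s ∈ S, G.dist s x ≠ G.dist s y

/-- A fault-tolerant resolving set: removing any single vertex leaves a resolving set. -/
def IsFTResolving {V : Type*} (G : SimpleGraph V) (S : Set V) : Prop :=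
  ∀ s ∈ S, IsResolving G (S \ {s})

/-- The metric dimension of `G`. -/
noncomputable def metricDim {V : Type*} [Fintype V] (G : SimpleGraph V) : ℕ :=
  sInf {n | ∃ S : Finset V, IsResolving G ↑S ∧ S.card = n}

/-- The fault-tolerant metric dimension of `G`. -/
noncomputable def ftDim {V : Type*} [Fintype V] (G : SimpleGraph V) : ℕ :=
  sInf {n | ∃ S : Finset V, IsFTResolving G ↑S ∧ S.card = n}

/-- `S` is a `k`-resolving set: every pair of distinct vertices is distinguished
by at least `k` vertices of `S`. -/
def IsKResolving {V : Type*} [Fintype V] (G : SimpleGraph V) (k : ℕ) (S : Finset V) : Prop :=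
  ∀ x y : V, x ≠ y → k ≤ (S.filter (fun s => G.dist s x ≠ G.dist s y)).card

/-- The `k`-metric dimension of `G`. -/
noncomputable def kMetricDim {V : Type*} [Fintype V] (G : SimpleGraph V) (k : ℕ) : ℕ :=
  sInf {n | ∃ S : Finset V, IsKResolving G k S ∧ S.card = n}

/-- The graph `M_t`: a clique on all binary strings of length `t`, together with
independent vertices `v_1, …, v_t`, where `v_i` is adjacent to exactly those strings
having `1` (`true`) at coordinate `i`. -/
def Mt (t : ℕ) : SimpleGraph ((Fin t → Bool) ⊕ Fin t) where
  Adj x y :=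
    match x, y with
    | Sum.inl u, Sum.inl v => u ≠ v
    | Sum.inl u, Sum.inr i => u i = true
    | Sum.inr i, Sum.inl u => u i = true
    | Sum.inr _, Sum.inr _ => False
  symm := by
    constructor
    rintro (u | i) (v | j) h
    · exact h.symm
    · exact h
    · exact h
    · exact h
  loopless := by
    constructor
    rintro (u | i) h
    · exact h rfl
    · exact h

namespace MtAux
open Sum

variable {t : ℕ}

lemma adj_ll {u v : Fin t → Bool} (h : u ≠ v) : (Mt t).Adj (inl u) (inl v) := h
lemma adj_rl {u : Fin t → Bool} {i : Fin t} (h : u i = true) :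
    (Mt t).Adj (inr i) (inl u) := h

lemma dist_ll {u v : Fin t → Bool} (h : u ≠ v) : (Mt t).dist (inl u) (inl v) = 1 :=
  SimpleGraph.dist_eq_one_iff_adj.mpr (adj_ll h)

lemma dist_rl_true {u : Fin t → Bool} {i : Fin t} (h : u i = true) :
    (Mt t).dist (inr i) (inl u) = 1 :=
  SimpleGraph.dist_eq_one_iff_adj.mpr (adj_rl h)

lemma dist_rl_false {u : Fin t → Bool} {i : Fin t} (h : u i = false) :
    (Mt t).dist (inr i) (inl u) = 2 := by
  set w : Fin t → Bool := Function.update u i true with hw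
  have hwi : w i = true := by simp [hw]
  have hwu : w ≠ u := by
    intro he
    rw [he, h] at hwi; exact Bool.false_ne_true hwi
  have p : (Mt t).Walk (inr i) (inl u) :=
    SimpleGraph.Walk.cons (adj_rl hwi) (SimpleGraph.Walk.cons (adj_ll hwu) SimpleGraph.Walk.nil)
  have hle : (Mt t).dist (inr i) (inl u) ≤ 2 :=
    SimpleGraph.dist_le
      (SimpleGraph.Walk.cons (adj_rl hwi) (SimpleGraph.Walk.cons (adj_ll hwu) SimpleGraph.Walk.nil))
  have hne0 : (Mt t).dist (inr i) (inl u) ≠ 0 := by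
    intro h0
    rcases SimpleGraph.dist_eq_zero_iff_eq_or_not_reachable.mp h0 with h1 | h1
    · exact Sum.inr_ne_inl h1
    · exact h1 p.reachable
  have hne1 : (Mt t).dist (inr i) (inl u) ≠ 1 := by
    intro h1
    have hadj : (Mt t).Adj (inr i) (inl u) := SimpleGraph.dist_eq_one_iff_adj.mp h1
    have : u i = true := hadj
    rw [h] at this; exact Bool.false_ne_true this
  omega

lemma dist_rr {i j : Fin t} (h : i ≠ j) : (Mt t).dist (inr i) (inr j) = 2 := by
  have h1 : (fun _ : Fin t => true) i = true := rfl
  have h2 : (Mt t).Adj (inl (fun _ : Fin t => true)) (inr j) :=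
    (adj_rl (u := fun _ => true) (i := j) rfl).symm
  have p : (Mt t).Walk (inr i) (inr j) :=
    SimpleGraph.Walk.cons (adj_rl (u := fun _ => true) (i := i) rfl) (SimpleGraph.Walk.cons h2 SimpleGraph.Walk.nil)
  have hle : (Mt t).dist (inr i) (inr j) ≤ 2 :=
    SimpleGraph.dist_le
      (SimpleGraph.Walk.cons (adj_rl (u := fun _ => true) (i := i) rfl) (SimpleGraph.Walk.cons h2 SimpleGraph.Walk.nil))
  have hne0 : (Mt t).dist (inr i) (inr j) ≠ 0 := by
    intro h0
    rcases SimpleGraph.dist_eq_zero_iff_eq_or_not_reachable.mp h0 with h1 | h1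
    · exact h (Sum.inr_injective h1)
    · exact h1 p.reachable
  have hne1 : (Mt t).dist (inr i) (inr j) ≠ 1 := by
    intro h1
    exact SimpleGraph.dist_eq_one_iff_adj.mp h1
  omega


def ones (u : Fin t → Bool) : ℕ := (Finset.univ.filter (fun i => u i = true)).card

lemma ones_succ {u v : Fin t → Bool} {i : Fin t} (hu : u i = true) (hv : v i = false)
    (hoff : ∀ j ≠ i, u j = v j) : ones u = ones v + 1 := by
  unfold ones
  have hins : Finset.univ.filter (fun j => u j = true) =
      insert i (Finset.univ.filter (fun j => v j = true)) := by
    ext j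
    simp only [Finset.mem_filter, Finset.mem_univ, true_and, Finset.mem_insert]
    by_cases hj : j = i
    · subst hj; simp [hu]
    · rw [hoff j hj]; constructor
      · exact fun h => Or.inr h
      · rintro (h | h)
        · exact absurd h hj
        · exact h
  rw [hins, Finset.card_insert_of_notMem]
  simp [hv]

lemma parity_flip {u v : Fin t → Bool} {i : Fin t} (hne : u i ≠ v i)
    (hoff : ∀ j ≠ i, u j = v j) : Even (ones u) ↔ ¬ Even (ones v) := by
  cases hu : u i <;> cases hv : v i
  · exact absurd (hu.trans hv.symm) hne
  · have h1 : ones v = ones u + 1 :=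
      ones_succ hv hu (fun j hj => (hoff j hj).symm)
    rw [h1]; simp [Nat.even_add_one]
  · have h1 : ones u = ones v + 1 := ones_succ hu hv hoff
    rw [h1]; simp [Nat.even_add_one]
  · exact absurd (hu.trans hv.symm) hne

lemma flip_parity (i : Fin t) (u : Fin t → Bool) :
    Even (ones (Function.update u i (!u i))) ↔ ¬ Even (ones u) := by
  apply parity_flip (i := i)
  · rw [Function.update_self]
    cases u i <;> simp
  · intro j hj
    exact Function.update_of_ne hj _ _

lemma card_evens (ht : 1 ≤ t) :
    (Finset.univ.filter (fun u : Fin t → Bool => Even (ones u))).card = 2 ^ (t - 1) := by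
  obtain ⟨i⟩ : Nonempty (Fin t) := ⟨⟨0, ht⟩⟩
  set E := Finset.univ.filter (fun u : Fin t → Bool => Even (ones u)) with hE
  set O := Finset.univ.filter (fun u : Fin t → Bool => ¬ Even (ones u)) with hO
  have hmem : ∀ u : Fin t → Bool,
      Function.update (Function.update u i (!u i)) i (!(Function.update u i (!u i)) i) = u := by
    intro u
    rw [Function.update_self, Bool.not_not, Function.update_idem, Function.update_eq_self]
  have hcard : E.card = O.card := by
    apply Finset.card_bij' (fun u _ => Function.update u i (!u i))
      (fun u _ => Function.update u i (!u i))
    · intro u _; exact hmem u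
    · intro u _; exact hmem u
    · intro u hu
      simp only [hE, Finset.mem_filter, Finset.mem_univ, true_and] at hu
      simp only [hO, Finset.mem_filter, Finset.mem_univ, true_and]
      rw [flip_parity]; simpa using hu
    · intro u hu
      simp only [hO, Finset.mem_filter, Finset.mem_univ, true_and] at hu
      simp only [hE, Finset.mem_filter, Finset.mem_univ, true_and]
      rw [flip_parity]; exact hu
  have hsum : E.card + O.card = 2 ^ t := by
    rw [hE, hO]
    rw [Finset.card_filter_add_card_filter_not]
    simp [Finset.card_univ]
  have hpow : 2 ^ t = 2 ^ (t - 1) + 2 ^ (t - 1) := by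
    have h1 : t - 1 + 1 = t := by omega
    calc 2 ^ t = 2 ^ (t - 1 + 1) := by rw [h1]
      _ = 2 ^ (t - 1) + 2 ^ (t - 1) := by rw [pow_succ]; ring
  omega

lemma distinguish_r {u v : Fin t → Bool} {i : Fin t} (h : u i ≠ v i) :
    (Mt t).dist (inr i) (inl u) ≠ (Mt t).dist (inr i) (inl v) := by
  cases hu : u i <;> cases hv : v i
  · exact absurd (hu.trans hv.symm) h
  · rw [dist_rl_false hu, dist_rl_true hv]; omega
  · rw [dist_rl_true hu, dist_rl_false hv]; omega
  · exact absurd (hu.trans hv.symm) h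

end MtAux

open MtAux Sum in
theorem stmt11 (t : ℕ) (ht : 3 ≤ t)
    (S : Finset ((Fin t → Bool) ⊕ Fin t))
    (hSdef : S = Finset.univ.filter (fun x => match x with
      | Sum.inl u => Even ((Finset.univ.filter (fun i : Fin t => u i = true)).card)
      | Sum.inr _ => True)) :
    IsFTResolving (Mt t) ↑S ∧ S.card = t + 2 ^ (t - 1) := by
  have hmemL : ∀ u : Fin t → Bool, (Sum.inl u : (Fin t → Bool) ⊕ Fin t) ∈ S ↔ Even (ones u) := by
    intro u; rw [hSdef]; simp [ones]
  have hmemR : ∀ i : Fin t, (Sum.inr i : (Fin t → Bool) ⊕ Fin t) ∈ S := by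
    intro i; rw [hSdef]; simp
  have hzero : (Sum.inl (fun _ => false) : (Fin t → Bool) ⊕ Fin t) ∈ S := by
    rw [hmemL]; simp [ones]
  constructor
  · -- FT resolving
    have key : ∀ x y : (Fin t → Bool) ⊕ Fin t, x ≠ y →
        ∃ w1 w2, w1 ∈ S ∧ w2 ∈ S ∧ w1 ≠ w2 ∧
          (Mt t).dist w1 x ≠ (Mt t).dist w1 y ∧ (Mt t).dist w2 x ≠ (Mt t).dist w2 y := by
      rintro (u | i) (v | j) hxy
      · -- inl u, inl v
        have huv : u ≠ v := fun h => hxy (by rw [h])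
        obtain ⟨i, hi⟩ : ∃ i, u i ≠ v i := by
          by_contra hc
          push_neg at hc
          exact huv (funext hc)
        by_cases hex : ∃ j, j ≠ i ∧ u j ≠ v j
        · obtain ⟨j, hji, hj⟩ := hex
          exact ⟨inr i, inr j, hmemR i, hmemR j, by simp [hji.symm],
            distinguish_r hi, distinguish_r hj⟩
        · push_neg at hex
          have hoff : ∀ j ≠ i, u j = v j := fun j hj => hex j hj
          by_cases heu : Even (ones u)
          · refine ⟨inl u, inr i, (hmemL u).mpr heu, hmemR i, by simp,
              ?_, distinguish_r hi⟩
            rw [SimpleGraph.dist_self, dist_ll huv]; omega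
          · have hev : Even (ones v) := by
              by_contra hcv
              exact heu ((parity_flip hi hoff).mpr hcv)
            refine ⟨inl v, inr i, (hmemL v).mpr hev, hmemR i, by simp,
              ?_, distinguish_r hi⟩
            rw [SimpleGraph.dist_self, dist_ll (Ne.symm huv)]; omega
      · -- inl u, inr j
        refine ⟨inr j, inl (fun _ => false), hmemR j, hzero, by simp, ?_, ?_⟩
        · rw [SimpleGraph.dist_self]
          cases hu : u j
          · rw [dist_rl_false hu]; omega
          · rw [dist_rl_true hu]; omega
        · have h2 : (Mt t).dist (inl (fun _ : Fin t => false)) (inr j) = 2 := by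
            rw [SimpleGraph.dist_comm]
            exact dist_rl_false rfl
          rw [h2]
          by_cases hu : u = fun _ => false
          · subst hu; rw [SimpleGraph.dist_self]; omega
          · rw [dist_ll (Ne.symm hu)]; omega
      · -- inr i, inl v
        refine ⟨inr i, inl (fun _ => false), hmemR i, hzero, by simp, ?_, ?_⟩
        · rw [SimpleGraph.dist_self]
          cases hv : v i
          · rw [dist_rl_false hv]; omega
          · rw [dist_rl_true hv]; omega
        · have h2 : (Mt t).dist (inl (fun _ : Fin t => false)) (inr i) = 2 := by
            rw [SimpleGraph.dist_comm]
            exact dist_rl_false rfl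
          rw [h2]
          by_cases hv : v = fun _ => false
          · subst hv; rw [SimpleGraph.dist_self]; omega
          · rw [dist_ll (Ne.symm hv)]; omega
      · -- inr i, inr j
        have hij : i ≠ j := fun h => hxy (by rw [h])
        refine ⟨inr i, inr j, hmemR i, hmemR j, by simp [hij],
          ?_, ?_⟩
        · rw [SimpleGraph.dist_self, dist_rr hij]; omega
        · rw [SimpleGraph.dist_self, dist_rr (Ne.symm hij)]; omega
    intro s hs x y hxy
    obtain ⟨w1, w2, hw1, hw2, hne, hd1, hd2⟩ := key x y hxy
    by_cases hws : w1 = s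
    · refine ⟨w2, ?_, hd2⟩
      refine ⟨by exact_mod_cast hw2, ?_⟩
      simp only [Set.mem_singleton_iff]
      intro h; exact hne (h ▸ hws ▸ rfl)
    · exact ⟨w1, ⟨by exact_mod_cast hw1, by simpa using hws⟩, hd1⟩
  · -- cardinality
    have hsplit : S = ((Finset.univ.filter (fun u : Fin t → Bool => Even (ones u))).map
        ⟨Sum.inl, Sum.inl_injective⟩) ∪
        (Finset.univ.map (⟨Sum.inr, Sum.inr_injective⟩ : Fin t ↪ (Fin t → Bool) ⊕ Fin t)) := by
      ext x
      rcases x with u | i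
      · simp [hSdef]; rfl
      · simp [hSdef]
    have hdisj : Disjoint ((Finset.univ.filter (fun u : Fin t → Bool => Even (ones u))).map
        ⟨Sum.inl, Sum.inl_injective⟩)
        (Finset.univ.map (⟨Sum.inr, Sum.inr_injective⟩ : Fin t ↪ (Fin t → Bool) ⊕ Fin t)) := by
      rw [Finset.disjoint_left]
      rintro x hx hy
      obtain ⟨u, -, rfl⟩ := Finset.mem_map.mp hx
      obtain ⟨i, -, hi⟩ := Finset.mem_map.mp hy
      exact Sum.inr_ne_inl hi
    rw [hsplit, Finset.card_union_of_disjoint hdisj, Finset.card_map, Finset.card_map,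
      card_evens (by omega), Finset.card_univ, Fintype.card_fin]
    exact Nat.add_comm _ _
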